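/- Let C be a triangulated category and D a distinguished abelian subcategory of C. If the inclusion functor D → C admits a left adjoint or a right adjoint (as an additive functor), then the abelian category D is split, i.e., every monomorphism and every epimorphism in D is split. -/

import Mathlib

universe v u v' u'

open CategoryTheory Category Limits Pretriangulated

lemma aux_splitMono {C : Type u} [Category.{v} C] [HasZeroObject C] [HasShift C ℤ]
    [Preadditive C] [∀ n : ℤ, (CategoryTheory.shiftFunctor C n).Additive] [Pretriangulated C]
    (T : Triangle C) (hT : T ∈ distTriang C) (h3 : T.mor₃ = 0) :
    IsSplitMono T.mor₁ := by
  have hT' := inv_rot_of_distTriang T hT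
  obtain ⟨g, hg⟩ := Triangle.yoneda_exact₂ _ hT' (𝟙 T.obj₁) (by simp [h3]; exact zero_comp)
  exact ⟨⟨⟨g, hg.symm⟩⟩⟩

lemma aux_splitEpi {C : Type u} [Category.{v} C] [HasZeroObject C] [HasShift C ℤ]
    [Preadditive C] [∀ n : ℤ, (CategoryTheory.shiftFunctor C n).Additive] [Pretriangulated C]
    (T : Triangle C) (hT : T ∈ distTriang C) (h3 : T.mor₃ = 0) :
    IsSplitEpi T.mor₂ := by
  obtain ⟨g, hg⟩ := Triangle.coyoneda_exact₃ _ hT (𝟙 T.obj₃) (by simp [h3])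
  exact ⟨⟨⟨g, hg.symm⟩⟩⟩

/-- Let `C` be a triangulated category and `D` a distinguished abelian
subcategory of `C` (encoded as a fully faithful additive functor `ι : D ⥤ C` from an
abelian category such that every short exact sequence in `D` can be completed to a
distinguished triangle in `C`).  If the inclusion `ι` admits a left adjoint (i.e. `ι` is a
right adjoint) or a right adjoint (i.e. `ι` is a left adjoint), then the abelian category
`D` is split: every monomorphism and every epimorphism in `D` is split. -/
theorem stmt19 {C : Type u} [Category.{v} C] [HasZeroObject C] [HasShift C ℤ]
    [Preadditive C] [∀ n : ℤ, (CategoryTheory.shiftFunctor C n).Additive] [Pretriangulated C]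
    {D : Type u'} [Category.{v'} D] [Abelian D]
    (ι : D ⥤ C) [ι.Full] [ι.Faithful] [ι.Additive]
    (hdist : ∀ S : ShortComplex D, S.ShortExact →
      ∃ h : ι.obj S.X₃ ⟶ (ι.obj S.X₁)⟦(1 : ℤ)⟧,
        Triangle.mk (ι.map S.f) (ι.map S.g) h ∈ distTriang C)
    (hadj : ι.IsRightAdjoint ∨ ι.IsLeftAdjoint) :
    (∀ {X Y : D} (f : X ⟶ Y), Mono f → IsSplitMono f) ∧
    (∀ {X Y : D} (f : X ⟶ Y), Epi f → IsSplitEpi f) := by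
  constructor
  · intro X Y f hf
    haveI := hf
    let S : ShortComplex D := ShortComplex.mk f (cokernel.π f) (cokernel.condition f)
    have hS : S.ShortExact := { exact := S.exact_of_g_is_cokernel (cokernelIsCokernel f) }
    obtain ⟨h, hT⟩ := hdist S hS
    have hc := comp_distTriang_mor_zero₃₁ _ hT
    have hc' := comp_distTriang_mor_zero₂₃ _ hT
    dsimp [S] at hc hc'
    simp only [Triangle.mk_mor₁, Triangle.mk_mor₂, Triangle.mk_mor₃] at hc hc'
    have h0 : h = 0 := by
      rcases hadj with hL | hR
      · haveI := hL
        haveI : Mono (ι.map f) := ι.map_mono f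
        haveI : Mono ((shiftFunctor C (1 : ℤ)).map (ι.map f)) := (shiftFunctor C (1 : ℤ)).map_mono _
        exact @zero_of_comp_mono _ _ _ _ _ _ _ _ this hc
      · haveI := hR
        haveI : Epi (ι.map (cokernel.π f)) := ι.map_epi _
        exact @zero_of_epi_comp _ _ _ _ _ _ _ _ this hc'
    obtain ⟨⟨r, hr⟩⟩ := aux_splitMono _ hT h0
    dsimp [S] at hr
    simp only [Triangle.mk_mor₁, Triangle.mk_obj₁] at hr
    exact ⟨⟨⟨ι.preimage (r : ι.obj Y ⟶ ι.obj X), ι.map_injective (by exact (ι.map_comp _ _).trans ((congrArg (ι.map f ≫ ·) (ι.map_preimage r)).trans (hr.trans (ι.map_id X).symm)))⟩⟩⟩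
  · intro X Y f hf
    haveI := hf
    let S : ShortComplex D := ShortComplex.mk (kernel.ι f) f (kernel.condition f)
    have hS : S.ShortExact := { exact := S.exact_of_f_is_kernel (kernelIsKernel f) }
    obtain ⟨h, hT⟩ := hdist S hS
    have hc := comp_distTriang_mor_zero₃₁ _ hT
    have hc' := comp_distTriang_mor_zero₂₃ _ hT
    dsimp [S] at hc hc'
    simp only [Triangle.mk_mor₁, Triangle.mk_mor₂, Triangle.mk_mor₃] at hc hc'
    have h0 : h = 0 := by
      rcases hadj with hL | hR
      · haveI := hL
        haveI : Mono (ι.map (kernel.ι f)) := ι.map_mono _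
        haveI : Mono ((shiftFunctor C (1 : ℤ)).map (ι.map (kernel.ι f))) := (shiftFunctor C (1 : ℤ)).map_mono _
        exact @zero_of_comp_mono _ _ _ _ _ _ _ _ this hc
      · haveI := hR
        haveI : Epi (ι.map f) := ι.map_epi f
        exact @zero_of_epi_comp _ _ _ _ _ _ _ _ this hc'
    obtain ⟨⟨s, hs⟩⟩ := aux_splitEpi _ hT h0
    dsimp [S] at hs
    simp only [Triangle.mk_mor₂, Triangle.mk_obj₃] at hs
    exact ⟨⟨⟨ι.preimage (s : ι.obj Y ⟶ ι.obj X), ι.map_injective (by exact (ι.map_comp _ _).trans ((congrArg (· ≫ ι.map f) (ι.map_preimage s)).trans (hs.trans (ι.map_id Y).symm)))⟩⟩⟩
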